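/- Let L be a real M×M matrix and v_{r₁},…,v_{r_ξ}, v_{l₁},…,v_{l_ξ} ∈ ℝ^M with L·v_{rᵢ} = 0, v_{lᵢ}ᵀ·L = 0, and v_{lᵢ}ᵀ·v_{rⱼ} = δ_{ij} for all i,j ≤ ξ. Let P be a symmetric positive definite real M×M matrix satisfying P·L + Lᵀ·P = I − Σᵢ₌₁^ξ αᵢ·(P·v_{rᵢ}·v_{lᵢ}ᵀ + v_{lᵢ}·v_{rᵢ}ᵀ·P) for some reals αᵢ, let λ_max and λ_min be the largest and smallest eigenvalues of P, and let k₁ > 0. Then for every x₀ ∈ ℝ^M with v_{lᵢ}ᵀ·x₀ = 0 for all i ≤ ξ, the trajectory x(t) := exp(−k₁·t·L)·x₀ satisfies x(t)ᵀ·P·x(t) ≤ e^{−(k₁/λ_max)·t} · x₀ᵀ·P·x₀ for all t ≥ 0, and consequently ‖x(t)‖² ≤ (λ_max/λ_min)·e^{−(k₁/λ_max)·t}·‖x₀‖². -/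

import Mathlib

open Matrix

section helpers

attribute [local instance] Matrix.linftyOpNormedAddCommGroup Matrix.linftyOpNormedRing
  Matrix.linftyOpNormedAlgebra

theorem aux_vecMul_exp {M : ℕ} (A : Matrix (Fin M) (Fin M) ℝ) (v : Fin M → ℝ) (hv : v ᵥ* A = 0) :
    v ᵥ* NormedSpace.exp A = v := by
  have hsum : Summable fun n : ℕ => ((n.factorial : ℝ))⁻¹ • A ^ n :=
    NormedSpace.expSeries_summable' A
  let f : Matrix (Fin M) (Fin M) ℝ →ₗ[ℝ] (Fin M → ℝ) :=
    { toFun := fun B => v ᵥ* B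
      map_add' := fun B C => by simp [Matrix.vecMul_add]
      map_smul' := fun c B => by
        ext j
        simp [Matrix.vecMul, dotProduct, Finset.mul_sum, mul_comm, mul_left_comm] }
  have hcont : Continuous f := f.continuous_of_finiteDimensional
  have hpow : ∀ n : ℕ, v ᵥ* (A ^ n) = if n = 0 then v else 0 := by
    intro n
    cases n with
    | zero => simp
    | succ m => rw [pow_succ', ← Matrix.vecMul_vecMul, hv]; simp
  rw [NormedSpace.exp_eq_tsum (𝕂 := ℝ)]
  have := ((ContinuousLinearMap.mk f hcont)).map_tsum hsum
  calc v ᵥ* ∑' n : ℕ, ((n.factorial : ℝ))⁻¹ • A ^ n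
      = ∑' n : ℕ, ((n.factorial : ℝ))⁻¹ • (v ᵥ* A ^ n) := by
        simpa [f] using this
    _ = v := by
        rw [tsum_eq_single 0 (by intro n hn; rw [hpow n]; simp [hn])]
        simp

theorem aux_hasDerivAt {M : ℕ} (L : Matrix (Fin M) (Fin M) ℝ) (k₁ : ℝ) (x₀ : Fin M → ℝ) (s : ℝ) :
    HasDerivAt (fun u : ℝ => NormedSpace.exp (-(k₁ * u) • L) *ᵥ x₀)
      ((-k₁) • (L *ᵥ (NormedSpace.exp (-(k₁ * s) • L) *ᵥ x₀))) s := by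
  have h1 : HasDerivAt (fun u : ℝ => NormedSpace.exp (u • L))
      (L * NormedSpace.exp ((-(k₁ * s)) • L)) (-(k₁ * s)) :=
    hasDerivAt_exp_smul_const' L (-(k₁ * s))
  have h2 : HasDerivAt (fun u : ℝ => -(k₁ * u)) (-k₁) s := by
    simpa using (hasDerivAt_id s).const_mul (-k₁)
  have hE : HasDerivAt (fun u : ℝ => NormedSpace.exp (-(k₁ * u) • L))
      ((-k₁) • (L * NormedSpace.exp (-(k₁ * s) • L))) s := by
    exact HasDerivAt.scomp s h1 h2
  let f : Matrix (Fin M) (Fin M) ℝ →ₗ[ℝ] (Fin M → ℝ) :=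
    { toFun := fun B => B *ᵥ x₀
      map_add' := fun B C => by simp [Matrix.add_mulVec]
      map_smul' := fun c B => by simp [Matrix.smul_mulVec] }
  have hcont : Continuous f := f.continuous_of_finiteDimensional
  have := (ContinuousLinearMap.mk f hcont).hasFDerivAt.comp_hasDerivAt s hE
  refine this.congr_deriv ?_
  change (_ : Matrix (Fin M) (Fin M) ℝ) *ᵥ x₀ = _
  simp [Matrix.neg_mulVec, Matrix.smul_mulVec, Matrix.mulVec_mulVec]

end helpers

theorem aux_rayleigh {M : ℕ} (P : Matrix (Fin M) (Fin M) ℝ) (hP : P.IsHermitian)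
    (x : Fin M → ℝ) (a b : ℝ) (ha : ∀ i, a ≤ hP.eigenvalues i) (hb : ∀ i, hP.eigenvalues i ≤ b) :
    a * (x ⬝ᵥ x) ≤ x ⬝ᵥ (P *ᵥ x) ∧ x ⬝ᵥ (P *ᵥ x) ≤ b * (x ⬝ᵥ x) := by
  set U : Matrix (Fin M) (Fin M) ℝ := ↑hP.eigenvectorUnitary with hU
  have hstar : star U = Uᵀ := by
    ext i j; simp [Matrix.conjTranspose_apply]
  have hUU : U * Uᵀ = 1 := by
    rw [← hstar]; exact (Matrix.mem_unitaryGroup_iff).mp hP.eigenvectorUnitary.2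
  set y := x ᵥ* U with hy
  have h1 : x ⬝ᵥ (P *ᵥ x) = ∑ i, hP.eigenvalues i * (y i * y i) := by
    conv_lhs => rw [hP.spectral_theorem, Unitary.conjStarAlgAut_apply]
    rw [Matrix.dotProduct_mulVec, ← Matrix.vecMul_vecMul, ← Matrix.vecMul_vecMul, ← hU, ← hy,
      hstar, Matrix.vecMul_transpose]
    rw [show U *ᵥ (y ᵥ* diagonal (RCLike.ofReal ∘ hP.eigenvalues)) ⬝ᵥ x
        = (y ᵥ* diagonal (RCLike.ofReal ∘ hP.eigenvalues)) ⬝ᵥ (x ᵥ* U) from ?_]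
    · rw [← hy]
      simp [Matrix.vecMul_diagonal, dotProduct, mul_comm, mul_left_comm]
    · rw [dotProduct_comm, Matrix.dotProduct_mulVec]; exact dotProduct_comm _ _
  have h2 : x ⬝ᵥ x = ∑ i, y i * y i := by
    have : y ⬝ᵥ y = x ⬝ᵥ x := by
      rw [hy, show x ᵥ* U = Uᵀ *ᵥ x from (Matrix.mulVec_transpose U x).symm,
        Matrix.dotProduct_mulVec, Matrix.vecMul_transpose, Matrix.mulVec_mulVec, hUU,
        Matrix.one_mulVec]
    rw [← this]; rfl
  constructor
  · rw [h1, h2, Finset.mul_sum]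
    exact Finset.sum_le_sum fun i _ => mul_le_mul_of_nonneg_right (ha i) (mul_self_nonneg _)
  · rw [h1, h2, Finset.mul_sum]
    exact Finset.sum_le_sum fun i _ => mul_le_mul_of_nonneg_right (hb i) (mul_self_nonneg _)

theorem aux_sum_mulVec {M ξ : ℕ} (A : Fin ξ → Matrix (Fin M) (Fin M) ℝ) (v : Fin M → ℝ) :
    (∑ i, A i) *ᵥ v = ∑ i, A i *ᵥ v := by
  ext j
  simp only [Matrix.mulVec, dotProduct, Finset.sum_apply, Matrix.sum_apply,
    Finset.sum_mul]
  rw [Finset.sum_comm]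

theorem aux_dotProduct_sum {M ξ : ℕ} (v : Fin M → ℝ) (w : Fin ξ → Fin M → ℝ) :
    v ⬝ᵥ (∑ i, w i) = ∑ i, v ⬝ᵥ w i := by
  simp only [dotProduct, Finset.sum_apply, Finset.mul_sum]
  rw [Finset.sum_comm]

theorem aux_vecMulVec_mulVec {M : ℕ} (a b v : Fin M → ℝ) :
    Matrix.vecMulVec a b *ᵥ v = (b ⬝ᵥ v) • a := by
  ext j
  simp only [Matrix.mulVec, dotProduct, Matrix.vecMulVec_apply, Pi.smul_apply,
    smul_eq_mul]
  rw [Finset.sum_mul]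
  exact Finset.sum_congr rfl fun k _ => by ring

/-- Within-mode exponential decay: if `P` is symmetric positive definite and solves the
modified Lyapunov equation with `Q = I`, and `x₀` is orthogonal to all left null vectors
`v_{lᵢ}` of `L`, then along `x(t) = exp(−k₁ t L) x₀` the Lyapunov quadratic form decays as
`x(t)ᵀ P x(t) ≤ e^{−(k₁/λmax) t} x₀ᵀ P x₀`, and hence
`‖x(t)‖² ≤ (λmax/λmin) e^{−(k₁/λmax) t} ‖x₀‖²` (Euclidean norms, written via dot
products). -/
theorem stmt_11 (M ξ : ℕ) (L : Matrix (Fin M) (Fin M) ℝ)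
    (vr vl : Fin ξ → Fin M → ℝ)
    (hvr : ∀ i, L *ᵥ vr i = 0)
    (hvl : ∀ i, vl i ᵥ* L = 0)
    (hbiorth : ∀ i j, vl i ⬝ᵥ vr j = if i = j then (1 : ℝ) else 0)
    (P : Matrix (Fin M) (Fin M) ℝ) (hP : P.PosDef)
    (α : Fin ξ → ℝ)
    (hLyap : P * L + Lᵀ * P =
      (1 : Matrix (Fin M) (Fin M) ℝ) - ∑ i : Fin ξ, α i •
        (P * Matrix.vecMulVec (vr i) (vl i) + Matrix.vecMulVec (vl i) (vr i) * P))
    (lmax lmin : ℝ)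
    (hmax : IsGreatest (Set.range hP.1.eigenvalues) lmax)
    (hmin : IsLeast (Set.range hP.1.eigenvalues) lmin)
    (k₁ : ℝ) (hk₁ : 0 < k₁) :
    ∀ x₀ : Fin M → ℝ, (∀ i, vl i ⬝ᵥ x₀ = 0) →
      ∀ t : ℝ, 0 ≤ t →
        (NormedSpace.exp (-(k₁ * t) • L) *ᵥ x₀) ⬝ᵥ
            (P *ᵥ (NormedSpace.exp (-(k₁ * t) • L) *ᵥ x₀)) ≤
          Real.exp (-(k₁ / lmax) * t) * (x₀ ⬝ᵥ (P *ᵥ x₀)) ∧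
        (NormedSpace.exp (-(k₁ * t) • L) *ᵥ x₀) ⬝ᵥ
            (NormedSpace.exp (-(k₁ * t) • L) *ᵥ x₀) ≤
          (lmax / lmin) * Real.exp (-(k₁ / lmax) * t) * (x₀ ⬝ᵥ x₀) := by
  intro x₀ hx₀ t ht
  set x : ℝ → Fin M → ℝ := fun s => NormedSpace.exp (-(k₁ * s) • L) *ᵥ x₀ with hxdef
  -- positivity of eigenvalue bounds
  have heigpos : ∀ i, 0 < hP.1.eigenvalues i := fun i => hP.eigenvalues_pos i
  obtain ⟨i0, hi0⟩ := hmax.1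
  have hlmaxpos : 0 < lmax := hi0 ▸ heigpos i0
  obtain ⟨i1, hi1⟩ := hmin.1
  have hlminpos : 0 < lmin := hi1 ▸ heigpos i1
  have hub : ∀ i, hP.1.eigenvalues i ≤ lmax := fun i => hmax.2 ⟨i, rfl⟩
  have hlb : ∀ i, lmin ≤ hP.1.eigenvalues i := fun i => hmin.2 ⟨i, rfl⟩
  -- initial value
  have hx0 : x 0 = x₀ := by
    simp [hxdef]
  -- orthogonality is preserved
  have horth : ∀ s (i : Fin ξ), vl i ⬝ᵥ x s = 0 := by
    intro s i
    have hz : vl i ᵥ* (-(k₁ * s) • L) = 0 := by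
      have h0 : vl i ᵥ* L = 0 := hvl i
      ext j
      have h0j := congrFun h0 j
      simp only [Matrix.vecMul, dotProduct, Pi.zero_apply] at h0j ⊢
      simp only [Matrix.smul_apply, smul_eq_mul]
      calc ∑ k, vl i k * (-(k₁ * s) * L k j)
          = (-(k₁ * s)) * ∑ k, vl i k * L k j := by
            rw [Finset.mul_sum]; exact Finset.sum_congr rfl fun k _ => by ring
        _ = 0 := by rw [h0j, mul_zero]
    rw [hxdef]
    rw [Matrix.dotProduct_mulVec, aux_vecMul_exp _ _ hz]
    exact hx₀ i
  -- derivative of x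
  have hxderiv : ∀ s, HasDerivAt x ((-k₁) • (L *ᵥ x s)) s := fun s => aux_hasDerivAt L k₁ x₀ s
  -- derivative of the Lyapunov function
  set V : ℝ → ℝ := fun s => x s ⬝ᵥ (P *ᵥ x s) with hVdef
  have hVderiv : ∀ s, HasDerivAt V (-k₁ * (x s ⬝ᵥ x s)) s := by
    intro s
    set xd : Fin M → ℝ := (-k₁) • (L *ᵥ x s) with hxd
    have hcomp : ∀ i : Fin M, HasDerivAt (fun u => x u i) (xd i) s := fun i =>
      (ContinuousLinearMap.proj (R := ℝ) (φ := fun _ : Fin M => ℝ) i).hasFDerivAt.comp_hasDerivAt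
        s (hxderiv s)
    have hterm : ∀ i : Fin M, HasDerivAt (fun u => x u i * (P *ᵥ x u) i)
        (xd i * (P *ᵥ x s) i + x s i * (P *ᵥ xd) i) s := by
      intro i
      have hPi : HasDerivAt (fun u => (P *ᵥ x u) i) ((P *ᵥ xd) i) s := by
        have h : HasDerivAt (fun u => ∑ j, P i j * x u j) (∑ j, P i j * xd j) s :=
          HasDerivAt.fun_sum fun j _ => (hcomp j).const_mul (P i j)
        exact h
      exact (hcomp i).mul hPi
    have hsum : HasDerivAt V (∑ i, (xd i * (P *ᵥ x s) i + x s i * (P *ᵥ xd) i)) s :=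
      HasDerivAt.fun_sum fun i _ => hterm i
    have hkey : (L *ᵥ x s) ⬝ᵥ (P *ᵥ x s) + x s ⬝ᵥ (P *ᵥ (L *ᵥ x s)) = x s ⬝ᵥ x s := by
      have h1 : (L *ᵥ x s) ⬝ᵥ (P *ᵥ x s) = x s ⬝ᵥ ((Lᵀ * P) *ᵥ x s) := by
        rw [← Matrix.mulVec_mulVec, Matrix.dotProduct_mulVec (x s) Lᵀ,
          Matrix.vecMul_transpose]
      have h2 : x s ⬝ᵥ (P *ᵥ (L *ᵥ x s)) = x s ⬝ᵥ ((P * L) *ᵥ x s) := by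
        rw [Matrix.mulVec_mulVec]
      rw [h1, h2, ← dotProduct_add, ← Matrix.add_mulVec, add_comm (Lᵀ * P) (P * L),
        hLyap, Matrix.sub_mulVec, dotProduct_sub, Matrix.one_mulVec]
      have hS : x s ⬝ᵥ ((∑ i : Fin ξ, α i • (P * Matrix.vecMulVec (vr i) (vl i) +
          Matrix.vecMulVec (vl i) (vr i) * P)) *ᵥ x s) = 0 := by
        rw [aux_sum_mulVec]
        rw [aux_dotProduct_sum]
        refine Finset.sum_eq_zero fun i _ => ?_
        rw [Matrix.smul_mulVec, dotProduct_smul, Matrix.add_mulVec,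
          ← Matrix.mulVec_mulVec, ← Matrix.mulVec_mulVec]
        have hv1 : Matrix.vecMulVec (vr i) (vl i) *ᵥ x s = 0 := by
          rw [aux_vecMulVec_mulVec, horth s i, zero_smul]
        have hv2 : Matrix.vecMulVec (vl i) (vr i) *ᵥ (P *ᵥ x s) = (vr i ⬝ᵥ (P *ᵥ x s)) • vl i :=
          aux_vecMulVec_mulVec _ _ _
        rw [hv1, Matrix.mulVec_zero, hv2, zero_add, dotProduct_smul]
        have : x s ⬝ᵥ vl i = 0 := by rw [dotProduct_comm]; exact horth s i
        rw [this]
        simp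
      rw [hS, sub_zero]
    have hval : ∑ i, (xd i * (P *ᵥ x s) i + x s i * (P *ᵥ xd) i) = -k₁ * (x s ⬝ᵥ x s) := by
      have hsplit : ∑ i, (xd i * (P *ᵥ x s) i + x s i * (P *ᵥ xd) i)
          = xd ⬝ᵥ (P *ᵥ x s) + x s ⬝ᵥ (P *ᵥ xd) := by
        rw [Finset.sum_add_distrib]; rfl
      rw [hsplit, hxd, smul_dotProduct, Matrix.mulVec_smul, dotProduct_smul,
        ← smul_add, hkey]
      simp
    exact hval ▸ hsum
  -- the rescaled function is antitone
  set c : ℝ := k₁ / lmax with hc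
  have hcpos : 0 < c := div_pos hk₁ hlmaxpos
  set g : ℝ → ℝ := fun s => Real.exp (c * s) * V s with hg
  have hgderiv : ∀ s, HasDerivAt g
      (c * Real.exp (c * s) * V s + Real.exp (c * s) * (-k₁ * (x s ⬝ᵥ x s))) s := by
    intro s
    have he : HasDerivAt (fun u => Real.exp (c * u)) (c * Real.exp (c * s)) s := by
      simpa [mul_comm] using ((hasDerivAt_id s).const_mul c).exp
    exact he.mul (hVderiv s)
  have hganti : Antitone g := by
    apply antitone_of_deriv_nonpos
    · exact fun s => (hgderiv s).differentiableAt
    · intro s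
      rw [(hgderiv s).deriv]
      have hray := aux_rayleigh P hP.1 (x s) lmin lmax hlb hub
      have hxx : 0 ≤ x s ⬝ᵥ x s := Finset.sum_nonneg fun i _ => mul_self_nonneg _
      have hVle : V s ≤ lmax * (x s ⬝ᵥ x s) := hray.2
      have hcV : c * V s ≤ k₁ * (x s ⬝ᵥ x s) := by
        calc c * V s ≤ c * (lmax * (x s ⬝ᵥ x s)) := by
              exact mul_le_mul_of_nonneg_left hVle (le_of_lt hcpos)
          _ = k₁ * (x s ⬝ᵥ x s) := by
              have hclmax : c * lmax = k₁ := by rw [hc]; field_simp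
              rw [← mul_assoc, hclmax]
      have hexp : 0 < Real.exp (c * s) := Real.exp_pos _
      have hmul := mul_le_mul_of_nonneg_left hcV (le_of_lt hexp)
      nlinarith [hmul]
  -- conclude
  have hmono : g t ≤ g 0 := hganti ht
  have hg0 : g 0 = x₀ ⬝ᵥ (P *ᵥ x₀) := by
    simp [hg, hVdef, hx0]
  have hVt : V t ≤ Real.exp (-(k₁ / lmax) * t) * (x₀ ⬝ᵥ (P *ᵥ x₀)) := by
    have h1 : Real.exp (c * t) * V t ≤ x₀ ⬝ᵥ (P *ᵥ x₀) := by rw [← hg0]; exact hmono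
    have h2 : Real.exp (-(k₁ / lmax) * t) = (Real.exp (c * t))⁻¹ := by
      rw [← Real.exp_neg]; congr 1; rw [hc]; ring
    rw [h2]
    rw [inv_mul_eq_div, le_div_iff₀ (Real.exp_pos _)]
    linarith [h1]
  constructor
  · exact hVt
  · have hray0 := aux_rayleigh P hP.1 x₀ lmin lmax hlb hub
    have hrayt := aux_rayleigh P hP.1 (x t) lmin lmax hlb hub
    have h1 : lmin * (x t ⬝ᵥ x t) ≤ V t := hrayt.1
    have h2 : x₀ ⬝ᵥ (P *ᵥ x₀) ≤ lmax * (x₀ ⬝ᵥ x₀) := hray0.2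
    have hexp : 0 < Real.exp (-(k₁ / lmax) * t) := Real.exp_pos _
    have h3 : lmin * (x t ⬝ᵥ x t) ≤ Real.exp (-(k₁ / lmax) * t) * (lmax * (x₀ ⬝ᵥ x₀)) := by
      calc lmin * (x t ⬝ᵥ x t) ≤ Real.exp (-(k₁ / lmax) * t) * (x₀ ⬝ᵥ (P *ᵥ x₀)) :=
            le_trans h1 hVt
        _ ≤ Real.exp (-(k₁ / lmax) * t) * (lmax * (x₀ ⬝ᵥ x₀)) :=
            mul_le_mul_of_nonneg_left h2 (le_of_lt hexp)
    rw [show (lmax / lmin) * Real.exp (-(k₁ / lmax) * t) * (x₀ ⬝ᵥ x₀)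
        = (Real.exp (-(k₁ / lmax) * t) * (lmax * (x₀ ⬝ᵥ x₀))) / lmin from by
          field_simp]
    rw [le_div_iff₀ hlminpos]
    nlinarith [h3]
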